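/- Let n, d ≥ 1 be integers with nd ≥ 2, and for each j ∈ {1,…,nd−1} let h_j be an integer with nd ≤ h_j ≤ nd + j − 1. Then the multiset consisting of the one-point interval [nd, nd] together with, for each j ∈ {1,…,nd−1}, the two intervals [nd − j, h_j] and [h_j + 1, nd + j], is an admissible proper system with parameters m = 2nd and σ(i) = min(i, 2nd − i), consisting of exactly 2nd − 1 intervals. -/

import Mathlib

/-- `IsProperSystem m σ S` : `S` is a *proper system* with parameters `(m, σ)`, i.e. a finite
multiset of closed intervals `[a,b]` with integer endpoints (encoded as pairs `(a,b)` of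
integers, one-point intervals `a = b` allowed) contained in `[0,m]`, such that for every
integer `i ∈ [0,m]` the number of intervals of `S` containing `i`, counted with multiplicity,
equals `σ i`. -/
def IsProperSystem (m : ℤ) (σ : ℤ → ℕ) (S : Multiset (ℤ × ℤ)) : Prop :=
  (∀ I ∈ S, 0 ≤ I.1 ∧ I.1 ≤ I.2 ∧ I.2 ≤ m) ∧
  ∀ i : ℤ, 0 ≤ i → i ≤ m →
    (S.filter fun I => I.1 ≤ i ∧ i ≤ I.2).card = σ i

/-- The *graph* of a system of intervals in `[0,m]` enumerated (with multiplicity) by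
`f : Fin t → ℤ × ℤ` : its vertices are the `t` intervals (`Sum.inl j` is the `j`-th interval)
together with `m` additional vertices `w_0, …, w_{m-1}` (`Sum.inr i` is `w_i`), and `w_i` is
adjacent exactly to the intervals whose right endpoint is `i` and to the intervals whose
left endpoint is `i + 1`. -/
def systemGraph (m : ℕ) {t : ℕ} (f : Fin t → ℤ × ℤ) : SimpleGraph (Fin t ⊕ Fin m) :=
  SimpleGraph.fromRel fun u v =>
    match u, v with
    | Sum.inl j, Sum.inr i => (f j).2 = (i : ℤ) ∨ (f j).1 = (i : ℤ) + 1
    | _, _ => False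

/-- A multiset of intervals in `[0,m]` is *admissible* if its graph is a tree.  (The graph is
independent, up to isomorphism, of the chosen enumeration of the multiset.) -/
def IsAdmissible (m : ℕ) (S : Multiset (ℤ × ℤ)) : Prop :=
  ∃ (t : ℕ) (f : Fin t → ℤ × ℤ), (List.ofFn f : Multiset (ℤ × ℤ)) = S ∧
    (systemGraph m f).IsTree

/-- `IsMarkedSystem m σ t M` : `M` is a *marked admissible proper system* with parameters
`(m, σ)` consisting of exactly `t` intervals: a finite multiset of pairs `(I, p)` where `p`
is an integer point of the interval `I`, whose multiset of first components is an admissible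
proper system with parameters `(m, σ)` consisting of `t` intervals. -/
def IsMarkedSystem (m : ℕ) (σ : ℤ → ℕ) (t : ℕ) (M : Multiset ((ℤ × ℤ) × ℤ)) : Prop :=
  (∀ p ∈ M, p.1.1 ≤ p.2 ∧ p.2 ≤ p.1.2) ∧
  IsProperSystem m σ (M.map Prod.fst) ∧
  IsAdmissible m (M.map Prod.fst) ∧
  M.card = t

/-- The multiset consisting of the one-point interval `[N, N]` together with, for each
`j ∈ {1, …, N-1}`, the two intervals `[N - j, h j]` and `[h j + 1, N + j]`. -/
def squareSystem (N : ℕ) (h : ℕ → ℤ) : Multiset (ℤ × ℤ) :=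
  ((N : ℤ), (N : ℤ)) ::ₘ
    (Finset.Icc 1 (N - 1)).val.bind fun j =>
      {((N : ℤ) - j, h j), (h j + 1, (N : ℤ) + j)}

open SimpleGraph Walk in
lemma acyclic_of_rank_parent {V : Type*} (G : SimpleGraph V) (r : V → ℕ) (par : V → V)
    (hr : ∀ ⦃u v⦄, G.Adj u v → r u ≠ r v)
    (hp : ∀ ⦃u v⦄, G.Adj u v → r u < r v → u = par v) : G.IsAcyclic := by
  classical
  intro v c hc
  obtain ⟨u, hu, hmax⟩ : ∃ u ∈ c.support, ∀ w ∈ c.support, r w ≤ r u := by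
    obtain ⟨u, hu, hmax⟩ := c.support.toFinset.exists_max_image r
      ⟨v, by simp [c.start_mem_support]⟩
    exact ⟨u, by simpa using hu, fun w hw => hmax w (by simpa using hw)⟩
  set c' := c.rotate u hu with hc'def
  have hc' : c'.IsCycle := hc.rotate hu
  have hsup : ∀ w ∈ c'.support, r w ≤ r u := by
    intro w hw
    rw [Walk.mem_support_iff c'] at hw
    rcases hw with rfl | hw
    · exact le_refl _
    · exact hmax w ((Walk.mem_support_iff c).mpr (Or.inr
        (((Walk.support_rotate c u hu).mem_iff).mp hw)))
  have hnn : ¬ c'.Nil := hc'.not_nil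
  rw [Walk.not_nil_iff] at hnn
  obtain ⟨x, hux, q, hq⟩ := hnn
  obtain ⟨y, q', huy, hcat⟩ := Walk.exists_cons_eq_concat hux q
  have hxs : x ∈ c'.support := by rw [hq]; simp [q.start_mem_support]
  have hys : y ∈ c'.support := by
    rw [hq, hcat, Walk.concat_eq_append]
    exact (Walk.mem_support_append_iff _ _).mpr (Or.inl q'.end_mem_support)
  have hx : r x < r u := lt_of_le_of_ne (hsup x hxs) (fun e => hr hux e.symm)
  have hy : r y < r u := lt_of_le_of_ne (hsup y hys) (fun e => hr huy.symm e.symm)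
  have hxy : x = y := by rw [hp hux.symm hx, hp huy hy]
  subst hxy
  have e1 : c'.edges = s(u, x) :: q.edges := by rw [hq]; rfl
  have e2 : c'.edges = q'.edges ++ [s(u, x)] := by
    rw [hq, hcat, Walk.concat_eq_append, Walk.edges_append]
    simp [Sym2.eq_swap]
  have hnd : c'.edges.Nodup := hc'.isCircuit.isTrail.edges_nodup
  have hlen : 3 ≤ c'.edges.length := by
    rw [Walk.length_edges]; exact hc'.three_le_length
  rw [e1] at hnd
  have hmem : s(u, x) ∈ q.edges := by
    have := e1.symm.trans e2
    match hq' : q'.edges with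
    | [] => rw [hq', List.nil_append] at this
            rw [e2, hq'] at hlen; simp at hlen
    | e :: l =>
      rw [hq', List.cons_append] at this
      injection this with h1 h2
      rw [h2]; simp
  exact (List.nodup_cons.mp hnd).1 hmem

namespace St5
variable (N : ℕ) (h : ℕ → ℤ)

def g (k : ℕ) : ℤ × ℤ :=
  if k = 0 then ((N : ℤ), (N : ℤ))
  else if k % 2 = 1 then ((N : ℤ) - ((k+1)/2 : ℕ), h ((k+1)/2))
  else (h (k/2) + 1, (N : ℤ) + (k/2 : ℕ))

lemma ofFn_inner (M : ℕ) :
    (↑(List.ofFn (fun k : Fin (2*M) => g N h (k.val+1))) : Multiset (ℤ × ℤ)) =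
      (Finset.Icc 1 M).val.bind fun j =>
        {((N : ℤ) - j, h j), (h j + 1, (N : ℤ) + j)} := by
  induction M with
  | zero => simp
  | succ M ih =>
    have h2 : 2*(M+1) = (2*M+1)+1 := by ring
    have heq : (List.ofFn (fun k : Fin (2*(M+1)) => g N h (k.val+1)))
        = (List.ofFn (fun k : Fin ((2*M+1)+1) => g N h (k.val+1))) := by
      congr 1
    rw [heq, List.ofFn_succ', List.ofFn_succ']
    have hB : g N h ((Fin.last (2*M+1)).val + 1) = (h (M+1) + 1, (N:ℤ) + (M+1 : ℕ)) := by
      have e : (2*M+1)+1 = 2*(M+1) := by ring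
      simp only [Fin.val_last, g]
      rw [if_neg (by omega), if_neg (by omega)]
      have e2 : (2*M+1+1)/2 = M+1 := by omega
      rw [e2]
    have hA : g N h ((Fin.last (2*M)).val + 1) = ((N:ℤ) - (M+1 : ℕ), h (M+1)) := by
      simp only [Fin.val_last, g]
      rw [if_neg (by omega), if_pos (by omega)]
      have e2 : (2*M+1+1)/2 = M+1 := by omega
      rw [show 2*M+1 = 2*M+1 from rfl] at *
      have e3 : (2*M+1+1)/2 = M+1 := by omega
      rw [e3]
    have hIcc : Finset.Icc 1 (M+1) = insert (M+1) (Finset.Icc 1 M) := by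
      rw [Finset.insert_Icc_right_eq_Icc_add_one (by omega)]
    have hnot : (M+1) ∉ Finset.Icc 1 M := by simp
    have hcast : ∀ (k : Fin (2*M)),
        g N h ((Fin.castSucc (Fin.castSucc k)).val + 1) = g N h (k.val + 1) := fun k => rfl
    simp only [List.concat_eq_append]
    push_cast [Multiset.cons_coe]
    rw [hIcc, Finset.insert_val, Multiset.ndinsert_of_notMem hnot, Multiset.cons_bind]
    have : (↑(List.ofFn fun k : Fin (2*M) => g N h ((Fin.castSucc (Fin.castSucc k)).val + 1)) : Multiset (ℤ×ℤ))
        = (Finset.Icc 1 M).val.bind fun j => {((N : ℤ) - j, h j), (h j + 1, (N : ℤ) + j)} := by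
      rw [show (List.ofFn fun k : Fin (2*M) => g N h ((Fin.castSucc (Fin.castSucc k)).val + 1))
          = List.ofFn fun k : Fin (2*M) => g N h (k.val + 1) from by simp [hcast]]
      exact ih
    have hA' : g N h ((Fin.last (2*M)).castSucc.val + 1) = ((N:ℤ) - (M+1 : ℕ), h (M+1)) := hA
    have hB' : g N h (2*M+1+1) = (h (M+1) + 1, (N:ℤ) + (M+1 : ℕ)) := hB
    rw [hA', hB', ← this]
    rw [show ((List.ofFn fun i : Fin (2*M) => g N h (i.castSucc.castSucc.val + 1)) ++
          [((N:ℤ) - (M+1 : ℕ), h (M+1))] ++ [(h (M+1) + 1, (N:ℤ) + (M+1 : ℕ))] : Multiset (ℤ×ℤ))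
        = ↑(List.ofFn fun i : Fin (2*M) => g N h (i.castSucc.castSucc.val + 1)) +
          ({((N:ℤ) - (M+1 : ℕ), h (M+1))} + {(h (M+1) + 1, (N:ℤ) + (M+1 : ℕ))}) from by
      rw [← Multiset.coe_singleton, ← Multiset.coe_singleton, ← Multiset.coe_add,
        ← Multiset.coe_add, add_assoc]]
    rw [show ({((N:ℤ) - (M+1 : ℕ), h (M+1)), (h (M+1) + 1, (N:ℤ) + (M+1 : ℕ))} : Multiset (ℤ×ℤ))
        = {((N:ℤ) - (M+1 : ℕ), h (M+1))} + {(h (M+1) + 1, (N:ℤ) + (M+1 : ℕ))} from by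
      rw [Multiset.singleton_add]; rfl]
    exact add_comm _ _

lemma card_filter_bind {α β : Type*} (s : Multiset α) (f : α → Multiset β)
    (p : β → Prop) [DecidablePred p] :
    ((s.bind f).filter p).card = (s.map (fun a => ((f a).filter p).card)).sum := by
  induction s using Multiset.induction with
  | empty => simp
  | cons a s ih => simp [Multiset.cons_bind, Multiset.filter_add, ih]

lemma squareSystem_count (N : ℕ) (h : ℕ → ℤ) (hN : 2 ≤ N)
    (hh : ∀ j : ℕ, 1 ≤ j → j ≤ N - 1 → (N : ℤ) ≤ h j ∧ h j ≤ (N : ℤ) + j - 1)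
    (i : ℤ) (h0 : 0 ≤ i) (h2N : i ≤ 2 * N) :
    ((squareSystem N h).filter (fun I => I.1 ≤ i ∧ i ≤ I.2)).card
      = (min i (2 * (N : ℤ) - i)).toNat := by
  classical
  set K : ℕ := (i - N).natAbs with hK
  rw [squareSystem, Multiset.filter_cons, Multiset.card_add, card_filter_bind]
  have hsum : ((Finset.Icc 1 (N-1)).val.map
      (fun j : ℕ => ((({((N : ℤ) - j, h j), (h j + 1, (N : ℤ) + j)} : Multiset (ℤ×ℤ)).filter
        (fun I => I.1 ≤ i ∧ i ≤ I.2)).card))).sum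
      = ∑ j ∈ Finset.Icc 1 (N-1), (if K ≤ j then 1 else 0) := by
    rw [Finset.sum]
    congr 1
    apply Multiset.map_congr rfl
    intro j hj
    rw [Finset.mem_val, Finset.mem_Icc] at hj
    obtain ⟨hj1, hj2⟩ := hj
    obtain ⟨hb1, hb2⟩ := hh j hj1 hj2
    rw [show ({((N : ℤ) - j, h j), (h j + 1, (N : ℤ) + j)} : Multiset (ℤ×ℤ))
        = ((N : ℤ) - j, h j) ::ₘ {(h j + 1, (N : ℤ) + j)} from rfl]
    rw [Multiset.filter_cons, Multiset.filter_singleton]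
    by_cases hc : i ≤ h j
    · by_cases hc2 : (N:ℤ) - j ≤ i
      · rw [if_pos ⟨hc2, hc⟩, if_neg (by push_neg; intro hx; omega)]
        simp only [Multiset.card_add, Multiset.card_singleton, Multiset.card_zero]
        rw [if_pos (by omega)]; simp
      · rw [if_neg (by push_neg; intro hx; omega), if_neg (by push_neg; intro hx; omega)]
        simp only [Multiset.card_add, Multiset.card_zero]
        rw [if_neg (by omega)]; simp
    · by_cases hc2 : i ≤ (N:ℤ) + j
      · rw [if_neg (by push_neg; intro hx; omega), if_pos ⟨by omega, hc2⟩]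
        simp only [Multiset.card_add, Multiset.card_singleton, Multiset.card_zero]
        rw [if_pos (by omega)]
      · rw [if_neg (by push_neg; intro hx; omega), if_neg (by push_neg; intro hx; omega)]
        simp only [Multiset.card_add, Multiset.card_zero]
        rw [if_neg (by omega)]; simp
  rw [hsum]
  have hfilt : ∑ j ∈ Finset.Icc 1 (N-1), (if K ≤ j then 1 else 0)
      = ((Finset.Icc 1 (N-1)).filter (fun j => K ≤ j)).card := by
    rw [Finset.card_filter]
  have hicc : (Finset.Icc 1 (N-1)).filter (fun j => K ≤ j) = Finset.Icc (max 1 K) (N-1) := by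
    ext x
    simp only [Finset.mem_filter, Finset.mem_Icc, max_le_iff]
    omega
  rw [hfilt, hicc, Nat.card_Icc]
  by_cases hi : ((N:ℤ) ≤ i ∧ i ≤ (N:ℤ))
  · rw [if_pos hi]
    simp only [Multiset.card_singleton]
    omega
  · rw [if_neg hi]
    simp only [Multiset.card_zero]
    omega

lemma adj_iff (m : ℕ) {t : ℕ} (f : Fin t → ℤ × ℤ) (k : Fin t) (i : Fin m) :
    (systemGraph m f).Adj (Sum.inl k) (Sum.inr i) ↔
      (f k).2 = (i : ℤ) ∨ (f k).1 = (i : ℤ) + 1 := by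
  simp [systemGraph, SimpleGraph.fromRel_adj]

lemma adj_cases (m : ℕ) {t : ℕ} (f : Fin t → ℤ × ℤ) (u v : Fin t ⊕ Fin m)
    (huv : (systemGraph m f).Adj u v) :
    ∃ (k : Fin t) (i : Fin m), ((f k).2 = (i : ℤ) ∨ (f k).1 = (i : ℤ) + 1) ∧
      ((u = Sum.inl k ∧ v = Sum.inr i) ∨ (u = Sum.inr i ∧ v = Sum.inl k)) := by
  rw [systemGraph, SimpleGraph.fromRel_adj] at huv
  obtain ⟨hne, hrel⟩ := huv
  match u, v with
  | Sum.inl k, Sum.inr i =>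
    exact ⟨k, i, by simpa using hrel, Or.inl ⟨rfl, rfl⟩⟩
  | Sum.inr i, Sum.inl k =>
    exact ⟨k, i, by simpa using hrel, Or.inr ⟨rfl, rfl⟩⟩
  | Sum.inl k, Sum.inl k' => simp at hrel
  | Sum.inr i, Sum.inr i' => simp at hrel

def rk (N : ℕ) : (Fin (2*(N-1)+1) ⊕ Fin (2*N)) → ℕ :=
  Sum.elim
    (fun k => if k.val = 0 then 1 else if k.val % 2 = 1 then 2*k.val+3 else 2*k.val-1)
    (fun i => if N ≤ i.val then 4*(i.val - N) else 4*(N-1-i.val)+2)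

lemma g_zero (N : ℕ) (h : ℕ → ℤ) : g N h 0 = ((N : ℤ), (N : ℤ)) := by simp [g]

lemma g_odd (N : ℕ) (h : ℕ → ℤ) (j k : ℕ) (hk : k + 1 = 2*j) :
    g N h k = ((N : ℤ) - j, h j) := by
  have h1 : ¬ k = 0 := by omega
  have h2 : k % 2 = 1 := by omega
  have h3 : (k+1)/2 = j := by omega
  simp only [g, if_neg h1, if_pos h2, h3]

lemma g_even (N : ℕ) (h : ℕ → ℤ) (j k : ℕ) (hj : 1 ≤ j) (hk : k = 2*j) :
    g N h k = (h j + 1, (N : ℤ) + j) := by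
  have h1 : ¬ k = 0 := by omega
  have h2 : ¬ k % 2 = 1 := by omega
  have h3 : k/2 = j := by omega
  simp only [g, if_neg h1, if_neg h2, h3]

def ff (N : ℕ) (h : ℕ → ℤ) : Fin (2*(N-1)+1) → ℤ × ℤ := fun k => g N h k.val

lemma ofFn_eq (N : ℕ) (h : ℕ → ℤ) :
    (↑(List.ofFn (ff N h)) : Multiset (ℤ × ℤ)) = squareSystem N h := by
  have hstep : List.ofFn (ff N h)
      = g N h 0 :: List.ofFn (fun k : Fin (2*(N-1)) => g N h (k.val + 1)) := by
    rw [List.ofFn_succ]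
    rfl
  rw [hstep, ← Multiset.cons_coe, g_zero, ofFn_inner]
  rfl

lemma rk_inl0 (N : ℕ) (k : Fin (2*(N-1)+1)) (hk : k.val = 0) : rk N (Sum.inl k) = 1 := by
  simp only [rk, Sum.elim_inl, if_pos hk]

lemma rk_inlA (N : ℕ) (k : Fin (2*(N-1)+1)) (j : ℕ) (hk : k.val + 1 = 2*j) :
    rk N (Sum.inl k) = 4*j + 1 := by
  simp only [rk, Sum.elim_inl]
  rw [if_neg (by omega), if_pos (by omega)]
  omega

lemma rk_inlB (N : ℕ) (k : Fin (2*(N-1)+1)) (j : ℕ) (hj : 1 ≤ j) (hk : k.val = 2*j) :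
    rk N (Sum.inl k) = 4*j - 1 := by
  simp only [rk, Sum.elim_inl]
  rw [if_neg (by omega), if_neg (by omega)]
  omega

lemma rk_inr_ge (N : ℕ) (i : Fin (2*N)) (hi : N ≤ i.val) : rk N (Sum.inr i) = 4*(i.val - N) := by
  simp only [rk, Sum.elim_inr, if_pos hi]

lemma rk_inr_lt (N : ℕ) (i : Fin (2*N)) (hi : i.val < N) :
    rk N (Sum.inr i) = 4*(N-1-i.val) + 2 := by
  simp only [rk, Sum.elim_inr]
  rw [if_neg (by omega)]

lemma rk_parity_inl (N : ℕ) (k : Fin (2*(N-1)+1)) : rk N (Sum.inl k) % 2 = 1 := by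
  simp only [rk, Sum.elim_inl]
  split_ifs <;> omega

lemma rk_parity_inr (N : ℕ) (i : Fin (2*N)) : rk N (Sum.inr i) % 2 = 0 := by
  simp only [rk, Sum.elim_inr]
  split_ifs <;> omega

lemma isTree (N : ℕ) (h : ℕ → ℤ) (hN : 2 ≤ N)
    (hh : ∀ j : ℕ, 1 ≤ j → j ≤ N - 1 → (N : ℤ) ≤ h j ∧ h j ≤ (N : ℤ) + j - 1) :
    (systemGraph (2*N) (ff N h)).IsTree := by
  set G := systemGraph (2*N) (ff N h) with hG
  -- connectivity
  have reach_w : ∀ j : ℕ, ∀ _hj : j ≤ N - 1,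
      G.Reachable (Sum.inr ⟨N, by omega⟩) (Sum.inr ⟨N + j, by omega⟩) := by
    intro j
    induction j using Nat.strong_induction_on with
    | _ j ih =>
      intro hj
      rcases Nat.eq_zero_or_pos j with rfl | hj1
      · exact SimpleGraph.Reachable.refl _
      · obtain ⟨hb1, hb2⟩ := hh j hj1 hj
        have hee : (h j).toNat - N < j := by omega
        have hr1 := ih ((h j).toNat - N) hee (by omega)
        have hadj1 : G.Adj (Sum.inl ⟨2*j, by omega⟩) (Sum.inr ⟨N + ((h j).toNat - N), by omega⟩) := by
          rw [hG, adj_iff]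
          right
          show (ff N h ⟨2*j, by omega⟩).1 = _
          rw [ff, g_even N h j (2*j) hj1 rfl]
          push_cast
          omega
        have hadj2 : G.Adj (Sum.inl ⟨2*j, by omega⟩) (Sum.inr ⟨N + j, by omega⟩) := by
          rw [hG, adj_iff]
          left
          show (ff N h ⟨2*j, by omega⟩).2 = _
          rw [ff, g_even N h j (2*j) hj1 rfl]
          push_cast
          omega
        exact (hr1.trans hadj1.symm.reachable).trans hadj2.reachable
  have reach_wN : ∀ i : Fin (2*N), G.Reachable (Sum.inr ⟨N, by omega⟩) (Sum.inr i) := by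
    intro i
    have hii := i.isLt
    rcases le_or_gt N i.val with hge | hlt
    · have := reach_w (i.val - N) (by omega)
      convert this using 2
      exact Fin.ext (by show i.val = N + (i.val - N); omega)
    · have hadjN : G.Adj (Sum.inl ⟨0, by omega⟩) (Sum.inr ⟨N, by omega⟩) := by
        rw [hG, adj_iff]; left
        show (ff N h ⟨0, by omega⟩).2 = _
        rw [ff, g_zero]; try (push_cast <;> omega)
      rcases Nat.lt_or_ge i.val (N-1) with hsm | hbig
      · -- i.val ≤ N-2, j := N-1-i.val
        set j := N - 1 - i.val with hjdef
        have hj1 : 1 ≤ j := by omega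
        have hj2 : j ≤ N - 1 := by omega
        obtain ⟨hb1, hb2⟩ := hh j hj1 hj2
        have hr1 := reach_w ((h j).toNat - N) (by omega)
        have hadj1 : G.Adj (Sum.inl ⟨2*j-1, by omega⟩) (Sum.inr ⟨N + ((h j).toNat - N), by omega⟩) := by
          rw [hG, adj_iff]; left
          show (ff N h ⟨2*j-1, by omega⟩).2 = _
          rw [ff, g_odd N h j (2*j-1) (by omega)]
          push_cast; omega
        have hadj2 : G.Adj (Sum.inl ⟨2*j-1, by omega⟩) (Sum.inr i) := by
          rw [hG, adj_iff]; right
          show (ff N h ⟨2*j-1, by omega⟩).1 = _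
          rw [ff, g_odd N h j (2*j-1) (by omega)]
          push_cast; omega
        exact (hr1.trans hadj1.symm.reachable).trans hadj2.reachable
      · -- i.val = N-1
        have hadj2 : G.Adj (Sum.inl ⟨0, by omega⟩) (Sum.inr i) := by
          rw [hG, adj_iff]; right
          show (ff N h ⟨0, by omega⟩).1 = _
          rw [ff, g_zero]; try (push_cast <;> omega)
        exact hadjN.symm.reachable.trans hadj2.reachable
  have reach_all : ∀ v, G.Reachable (Sum.inr ⟨N, by omega⟩) v := by
    intro v
    match v with
    | Sum.inr i => exact reach_wN i
    | Sum.inl k =>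
      have hkk := k.isLt
      by_cases hk0 : k.val = 0
      · refine (reach_wN ⟨N, by omega⟩).trans (SimpleGraph.Adj.reachable ?_).symm
        rw [hG, adj_iff]; left
        show (ff N h k).2 = _
        rw [ff, hk0, g_zero]; try (push_cast <;> omega)
      · rcases Nat.even_or_odd k.val with ⟨j, hj⟩ | ⟨j, hj⟩
        · -- k.val = 2*j, B
          have hj1 : 1 ≤ j := by omega
          have hj2 : j ≤ N - 1 := by omega
          refine (reach_wN ⟨N+j, by omega⟩).trans (SimpleGraph.Adj.reachable ?_).symm
          rw [hG, adj_iff]; left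
          show (ff N h k).2 = _
          rw [ff, g_even N h j k.val hj1 (by omega)]
          push_cast; omega
        · -- k.val = 2*j+1, A_{j+1}
          have hj2 : j + 1 ≤ N - 1 := by omega
          obtain ⟨hb1, hb2⟩ := hh (j+1) (by omega) hj2
          refine (reach_wN ⟨(h (j+1)).toNat, by omega⟩).trans (SimpleGraph.Adj.reachable ?_).symm
          rw [hG, adj_iff]; left
          show (ff N h k).2 = _
          rw [ff, g_odd N h (j+1) k.val (by omega)]
          push_cast; omega
  have hconn : G.Connected := by
    rw [SimpleGraph.connected_iff]
    exact ⟨fun u v => (reach_all u).symm.trans (reach_all v), ⟨Sum.inr ⟨N, by omega⟩⟩⟩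
  -- acyclicity
  set par : (Fin (2*(N-1)+1) ⊕ Fin (2*N)) → (Fin (2*(N-1)+1) ⊕ Fin (2*N)) :=
    Sum.elim
      (fun k => if k.val = 0 then Sum.inr ⟨N % (2*N), Nat.mod_lt _ (by omega)⟩
        else Sum.inr ⟨(h (if k.val % 2 = 1 then (k.val+1)/2 else k.val/2)).toNat % (2*N),
          Nat.mod_lt _ (by omega)⟩)
      (fun i => if i.val = N then Sum.inr i
        else if N+1 ≤ i.val then Sum.inl ⟨2*(i.val - N), by have := i.isLt; omega⟩
        else if i.val = N-1 then Sum.inl ⟨0, by omega⟩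
        else Sum.inl ⟨2*(N-1-i.val)-1, by omega⟩) with hpar
  have main : ∀ (k : Fin (2*(N-1)+1)) (i : Fin (2*N)),
      ((ff N h k).2 = (i : ℤ) ∨ (ff N h k).1 = (i : ℤ) + 1) →
      (rk N (Sum.inl k) < rk N (Sum.inr i) → Sum.inl k = par (Sum.inr i)) ∧
      (rk N (Sum.inr i) < rk N (Sum.inl k) → Sum.inr i = par (Sum.inl k)) := by
    intro k i hcond
    have hki := k.isLt
    have hii := i.isLt
    by_cases hk0 : k.val = 0
    · have hfk : ff N h k = ((N : ℤ), (N : ℤ)) := by rw [ff, hk0, g_zero]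
      rw [hfk] at hcond
      rcases hcond with hc | hc
      · -- i.val = N
        have hiv : i.val = N := by omega
        refine ⟨fun hlt => absurd hlt ?_, fun _ => ?_⟩
        · rw [rk_inl0 N k hk0, rk_inr_ge N i (by omega)]; omega
        · rw [hpar]; simp only [Sum.elim_inl, if_pos hk0]
          refine congrArg Sum.inr (Fin.ext ?_)
          show i.val = N % (2*N)
          have := Nat.mod_eq_of_lt (show N < 2*N by omega); omega
      · -- i.val = N-1
        have hiv : i.val = N - 1 := by omega
        refine ⟨fun _ => ?_, fun hlt => absurd hlt ?_⟩
        · rw [hpar]; simp only [Sum.elim_inr]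
          rw [if_neg (by omega), if_neg (by omega), if_pos (by omega)]
          refine congrArg Sum.inl (Fin.ext ?_)
          show k.val = 0
          exact hk0
        · rw [rk_inl0 N k hk0, rk_inr_lt N i (by omega)]; omega
    · rcases Nat.even_or_odd k.val with ⟨j, hj⟩ | ⟨j', hj'⟩
      · -- k.val = 2*j : B_j
        have hj1 : 1 ≤ j := by omega
        have hj2 : j ≤ N - 1 := by omega
        obtain ⟨hb1, hb2⟩ := hh j hj1 hj2
        have hfk : ff N h k = (h j + 1, (N : ℤ) + j) := by
          rw [ff, g_even N h j k.val hj1 (by omega)]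
        rw [hfk] at hcond
        rcases hcond with hc | hc
        · -- right endpoint: i.val = N + j
          have hiv : i.val = N + j := by omega
          refine ⟨fun _ => ?_, fun hlt => absurd hlt ?_⟩
          · rw [hpar]; simp only [Sum.elim_inr]
            rw [if_neg (by omega), if_pos (by omega)]
            refine congrArg Sum.inl (Fin.ext ?_)
            show k.val = 2*(i.val - N)
            omega
          · rw [rk_inlB N k j hj1 (by omega), rk_inr_ge N i (by omega)]; omega
        · -- left endpoint: i.val = (h j).toNat
          have hiv : i.val = (h j).toNat := by omega
          refine ⟨fun hlt => absurd hlt ?_, fun _ => ?_⟩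
          · rw [rk_inlB N k j hj1 (by omega), rk_inr_ge N i (by omega)]; omega
          · rw [hpar]; simp only [Sum.elim_inl]
            rw [if_neg hk0, if_neg (by omega)]
            have hdiv : k.val / 2 = j := by omega
            rw [hdiv]
            refine congrArg Sum.inr (Fin.ext ?_)
            show i.val = (h j).toNat % (2*N)
            have := Nat.mod_eq_of_lt (show (h j).toNat < 2*N by omega); omega
      · -- k.val = 2*j'+1 : A_{j'+1}
        set j := j' + 1 with hjdef
        have hj1 : 1 ≤ j := by omega
        have hj2 : j ≤ N - 1 := by omega
        obtain ⟨hb1, hb2⟩ := hh j hj1 hj2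
        have hfk : ff N h k = ((N : ℤ) - j, h j) := by
          rw [ff, g_odd N h j k.val (by omega)]
        rw [hfk] at hcond
        rcases hcond with hc | hc
        · -- right endpoint: i.val = (h j).toNat
          have hiv : i.val = (h j).toNat := by omega
          refine ⟨fun hlt => absurd hlt ?_, fun _ => ?_⟩
          · rw [rk_inlA N k j (by omega), rk_inr_ge N i (by omega)]; omega
          · rw [hpar]; simp only [Sum.elim_inl]
            rw [if_neg hk0, if_pos (by omega)]
            have hdiv : (k.val + 1) / 2 = j := by omega
            rw [hdiv]
            refine congrArg Sum.inr (Fin.ext ?_)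
            show i.val = (h j).toNat % (2*N)
            have := Nat.mod_eq_of_lt (show (h j).toNat < 2*N by omega); omega
        · -- left endpoint: i.val = N - j - 1
          have hiv : i.val = N - j - 1 := by omega
          refine ⟨fun _ => ?_, fun hlt => absurd hlt ?_⟩
          · rw [hpar]; simp only [Sum.elim_inr]
            rw [if_neg (by omega), if_neg (by omega), if_neg (by omega)]
            refine congrArg Sum.inl (Fin.ext ?_)
            show k.val = 2*(N-1-i.val)-1
            omega
          · rw [rk_inlA N k j (by omega), rk_inr_lt N i (by omega)]; omega
  have hacyc : G.IsAcyclic := by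
    apply acyclic_of_rank_parent G (rk N) par
    · intro u v huv
      obtain ⟨k, i, hcond, hdir⟩ := adj_cases _ _ _ _ huv
      rcases hdir with ⟨rfl, rfl⟩ | ⟨rfl, rfl⟩
      · have h1 := rk_parity_inl N k
        have h2 := rk_parity_inr N i
        omega
      · have h1 := rk_parity_inl N k
        have h2 := rk_parity_inr N i
        omega
    · intro u v huv hlt
      obtain ⟨k, i, hcond, hdir⟩ := adj_cases _ _ _ _ huv
      rcases hdir with ⟨rfl, rfl⟩ | ⟨rfl, rfl⟩
      · exact (main k i hcond).1 hlt
      · exact (main k i hcond).2 hlt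
  exact ⟨hconn, hacyc⟩


end St5

/-- Let `n, d ≥ 1` with `nd ≥ 2`, and for each `j ∈ {1, …, nd-1}` let `h j`
be an integer with `nd ≤ h j ≤ nd + j - 1`.  Then the multiset consisting of the one-point
interval `[nd, nd]` together with, for each `j`, the two intervals `[nd - j, h j]` and
`[h j + 1, nd + j]`, is an admissible proper system with parameters `m = 2nd` and
`σ(i) = min(i, 2nd - i)`, consisting of exactly `2nd - 1` intervals. -/
theorem statement5 (n d : ℕ) (hn : 1 ≤ n) (hd : 1 ≤ d) (hnd : 2 ≤ n * d) (h : ℕ → ℤ)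
    (hh : ∀ j : ℕ, 1 ≤ j → j ≤ n * d - 1 →
      (n * d : ℤ) ≤ h j ∧ h j ≤ (n * d : ℤ) + j - 1) :
    IsProperSystem (2 * (n * d)) (fun i : ℤ => (min i (2 * ((n : ℤ) * d) - i)).toNat)
        (squareSystem (n * d) h) ∧
      IsAdmissible (2 * (n * d)) (squareSystem (n * d) h) ∧
      (squareSystem (n * d) h).card = 2 * (n * d) - 1 := by
  set N := n * d with hNdef
  have hh' : ∀ j : ℕ, 1 ≤ j → j ≤ N - 1 → (N : ℤ) ≤ h j ∧ h j ≤ (N : ℤ) + j - 1 := by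
    intro j hj1 hj2
    obtain ⟨a, b⟩ := hh j hj1 hj2
    constructor <;> push_cast at a b ⊢ <;> omega
  refine ⟨⟨?_, ?_⟩, ?_, ?_⟩
  · -- endpoints
    intro I hI
    simp only [squareSystem, Multiset.mem_cons, Multiset.mem_bind, Finset.mem_val,
      Finset.mem_Icc, Multiset.mem_singleton, Multiset.insert_eq_cons] at hI
    rcases hI with rfl | ⟨j, ⟨hj1, hj2⟩, hI⟩
    · refine ⟨by positivity, le_refl _, ?_⟩
      push_cast; omega
    · obtain ⟨a, b⟩ := hh' j hj1 hj2
      rcases hI with rfl | rfl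
      · refine ⟨?_, ?_, ?_⟩ <;> simp only [] <;> push_cast <;> omega
      · refine ⟨?_, ?_, ?_⟩ <;> simp only [] <;> push_cast <;> omega
  · -- counts
    intro i h0 hm
    have := St5.squareSystem_count N h hnd hh' i h0 (by push_cast at hm ⊢; omega)
    rw [this]
    congr 1
  · -- admissible
    refine ⟨2*(N-1)+1, St5.ff N h, St5.ofFn_eq N h, ?_⟩
    exact St5.isTree N h hnd hh'
  · -- card
    rw [← St5.ofFn_eq N h, Multiset.coe_card, List.length_ofFn]
    omega
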